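/- The expected linear (straight-line) distance from a uniformly random point in the unit disk to the boundary, in a uniformly random direction, equals 8/(3π). -/

import Mathlib

open Metric Set MeasureTheory

noncomputable section AuxRot

/-- Rotation by angle `θ` as a bare function on the Euclidean plane. -/
def rotE (θ : ℝ) (x : EuclideanSpace ℝ (Fin 2)) : EuclideanSpace ℝ (Fin 2) :=
  (WithLp.equiv 2 (Fin 2 → ℝ)).symm
    ![Real.cos θ * x 0 - Real.sin θ * x 1, Real.sin θ * x 0 + Real.cos θ * x 1]

@[simp] lemma rotE_apply0 (θ : ℝ) (x : EuclideanSpace ℝ (Fin 2)) :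
    rotE θ x 0 = Real.cos θ * x 0 - Real.sin θ * x 1 := rfl

@[simp] lemma rotE_apply1 (θ : ℝ) (x : EuclideanSpace ℝ (Fin 2)) :
    rotE θ x 1 = Real.sin θ * x 0 + Real.cos θ * x 1 := rfl

lemma euclidean_ext {x y : EuclideanSpace ℝ (Fin 2)} (h0 : x 0 = y 0) (h1 : x 1 = y 1) :
    x = y := by
  ext i
  fin_cases i
  · exact h0
  · exact h1

lemma norm_sq_two (x : EuclideanSpace ℝ (Fin 2)) : ‖x‖ = Real.sqrt ((x 0)^2 + (x 1)^2) := by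
  rw [EuclideanSpace.norm_eq, Fin.sum_univ_two, Real.norm_eq_abs, Real.norm_eq_abs,
    sq_abs, sq_abs]

lemma norm_rotE (θ : ℝ) (x : EuclideanSpace ℝ (Fin 2)) : ‖rotE θ x‖ = ‖x‖ := by
  rw [norm_sq_two, norm_sq_two x]
  congr 1
  simp only [rotE_apply0, rotE_apply1]
  linear_combination (x 0 ^ 2 + x 1 ^ 2) * Real.sin_sq_add_cos_sq θ

/-- Rotation by angle `θ` as a linear isometry equivalence of the Euclidean plane. -/
def rotLIE (θ : ℝ) : EuclideanSpace ℝ (Fin 2) ≃ₗᵢ[ℝ] EuclideanSpace ℝ (Fin 2) where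
  toFun := rotE θ
  invFun := rotE (-θ)
  left_inv x := by
    apply euclidean_ext
    · simp only [rotE_apply0, rotE_apply1, Real.cos_neg, Real.sin_neg]
      linear_combination (x 0) * Real.sin_sq_add_cos_sq θ
    · simp only [rotE_apply0, rotE_apply1, Real.cos_neg, Real.sin_neg]
      linear_combination (x 1) * Real.sin_sq_add_cos_sq θ
  right_inv x := by
    apply euclidean_ext
    · simp only [rotE_apply0, rotE_apply1, Real.cos_neg, Real.sin_neg]
      linear_combination (x 0) * Real.sin_sq_add_cos_sq θ
    · simp only [rotE_apply0, rotE_apply1, Real.cos_neg, Real.sin_neg]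
      linear_combination (x 1) * Real.sin_sq_add_cos_sq θ
  map_add' x y := by
    apply euclidean_ext <;>
      simp only [rotE_apply0, rotE_apply1, PiLp.add_apply] <;> ring
  map_smul' c x := by
    apply euclidean_ext <;>
      simp only [rotE_apply0, rotE_apply1, PiLp.smul_apply, smul_eq_mul,
        RingHom.id_apply] <;> ring
  norm_map' x := norm_rotE θ x

end AuxRot

section Aux

/-- The exit distance function. -/
noncomputable def Lval (x v : EuclideanSpace ℝ (Fin 2)) : ℝ :=
  sInf {t : ℝ | 0 ≤ t ∧ x + t • v ∉ interior (Metric.closedBall (0 : EuclideanSpace ℝ (Fin 2)) 1)}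

lemma mem_ball_iff_sq (x : EuclideanSpace ℝ (Fin 2)) :
    x ∈ Metric.ball (0 : EuclideanSpace ℝ (Fin 2)) 1 ↔ (x 0)^2 + (x 1)^2 < 1 := by
  rw [Metric.mem_ball, dist_zero_right, norm_sq_two]
  constructor
  · intro h
    nlinarith [Real.sq_sqrt (by positivity : (0:ℝ) ≤ (x 0)^2 + (x 1)^2),
      Real.sqrt_nonneg ((x 0)^2 + (x 1)^2)]
  · intro h
    have h1 : Real.sqrt ((x 0)^2 + (x 1)^2) < Real.sqrt 1 :=
      Real.sqrt_lt_sqrt (by positivity) h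
    simpa using h1

lemma mem_closedBall_iff_sq (x : EuclideanSpace ℝ (Fin 2)) :
    x ∈ Metric.closedBall (0 : EuclideanSpace ℝ (Fin 2)) 1 ↔ (x 0)^2 + (x 1)^2 ≤ 1 := by
  rw [Metric.mem_closedBall, dist_zero_right, norm_sq_two]
  constructor
  · intro h
    nlinarith [Real.sq_sqrt (by positivity : (0:ℝ) ≤ (x 0)^2 + (x 1)^2),
      Real.sqrt_nonneg ((x 0)^2 + (x 1)^2)]
  · intro h
    calc Real.sqrt ((x 0)^2 + (x 1)^2) ≤ Real.sqrt 1 := Real.sqrt_le_sqrt h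
    _ = 1 := Real.sqrt_one

/-- The unit vector in direction `0`. -/
noncomputable def e₁ : EuclideanSpace ℝ (Fin 2) := (WithLp.equiv 2 (Fin 2 → ℝ)).symm ![1, 0]

@[simp] lemma e₁_apply0 : e₁ 0 = 1 := rfl
@[simp] lemma e₁_apply1 : e₁ 1 = 0 := rfl

lemma rotLIE_e₁ (θ : ℝ) :
    rotLIE θ e₁ = (WithLp.equiv 2 (Fin 2 → ℝ)).symm ![Real.cos θ, Real.sin θ] := by
  apply euclidean_ext <;>
    simp [rotLIE, LinearIsometryEquiv.coe_mk, WithLp.equiv_symm_apply, PiLp.toLp_apply]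

lemma Lval_rot (θ : ℝ) (x v : EuclideanSpace ℝ (Fin 2)) :
    Lval (rotLIE θ x) (rotLIE θ v) = Lval x v := by
  unfold Lval
  congr 1
  ext t
  simp only [Set.mem_setOf_eq, interior_closedBall (0 : EuclideanSpace ℝ (Fin 2)) one_ne_zero]
  constructor <;> intro h <;> refine ⟨h.1, fun hmem => h.2 ?_⟩
  · rw [mem_ball_zero_iff] at hmem ⊢
    rw [← (rotLIE θ).map_smul, ← (rotLIE θ).map_add, (rotLIE θ).norm_map]
    exact hmem
  · rw [mem_ball_zero_iff] at hmem ⊢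
    rw [← (rotLIE θ).map_smul, ← (rotLIE θ).map_add, (rotLIE θ).norm_map] at hmem
    exact hmem

lemma Lval_formula (x : EuclideanSpace ℝ (Fin 2)) (hx : (x 0)^2 + (x 1)^2 < 1) :
    Lval x e₁ = Real.sqrt (1 - (x 1)^2) - x 0 := by
  set a := x 0
  set b := x 1
  set s := Real.sqrt (1 - b^2) with hs
  have hb2 : b^2 ≤ 1 := by nlinarith
  have hs0 : 0 ≤ s := Real.sqrt_nonneg _
  have hs2 : s^2 = 1 - b^2 := Real.sq_sqrt (by linarith)
  have has : a < s := by nlinarith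
  have hneg : -s < a := by nlinarith
  have hcoord : ∀ t : ℝ, (x + t • e₁) 0 = a + t ∧ (x + t • e₁) 1 = b := by
    intro t
    constructor <;> simp [PiLp.add_apply, PiLp.smul_apply, smul_eq_mul] <;> rfl
  have hset : {t : ℝ | 0 ≤ t ∧ x + t • e₁ ∉
      interior (Metric.closedBall (0 : EuclideanSpace ℝ (Fin 2)) 1)} = Set.Ici (s - a) := by
    ext t
    simp only [Set.mem_setOf_eq, Set.mem_Ici,
      interior_closedBall (0 : EuclideanSpace ℝ (Fin 2)) one_ne_zero, mem_ball_iff_sq,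
      (hcoord t).1, (hcoord t).2, not_lt]
    constructor
    · rintro ⟨ht0, hge⟩
      by_contra hlt
      push_neg at hlt
      have h1 : a + t < s := by linarith
      have h2 : -s < a + t := by linarith
      nlinarith
    · intro ht
      refine ⟨by linarith, by nlinarith⟩
  unfold Lval
  rw [hset, csInf_Ici]

end Aux

section Integral

open ENNReal

/-- The inner integral over the horizontal chord. -/
lemma chord_integral (b : ℝ) :
    ∫⁻ a : ℝ, Set.indicator {p : ℝ × ℝ | p.1^2 + p.2^2 ≤ 1}
      (fun p => ENNReal.ofReal (Real.sqrt (1 - p.2^2) - p.1)) (a, b)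
      = ENNReal.ofReal (2 - 2 * b^2) := by
  set s := Real.sqrt (1 - b^2) with hs
  have hs0 : 0 ≤ s := Real.sqrt_nonneg _
  have hcong : ∀ a : ℝ, Set.indicator {p : ℝ × ℝ | p.1^2 + p.2^2 ≤ 1}
      (fun p => ENNReal.ofReal (Real.sqrt (1 - p.2^2) - p.1)) (a, b)
      = Set.indicator {a : ℝ | a^2 + b^2 ≤ 1} (fun a => ENNReal.ofReal (s - a)) a := by
    intro a
    by_cases h : a^2 + b^2 ≤ 1
    · rw [Set.indicator_of_mem (show (a, b) ∈ {p : ℝ × ℝ | p.1^2 + p.2^2 ≤ 1} from h),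
        Set.indicator_of_mem (show a ∈ {a : ℝ | a^2 + b^2 ≤ 1} from h)]
    · rw [Set.indicator_of_notMem (show (a, b) ∉ {p : ℝ × ℝ | p.1^2 + p.2^2 ≤ 1} from h),
        Set.indicator_of_notMem (show a ∉ {a : ℝ | a^2 + b^2 ≤ 1} from h)]
  simp only [hcong]
  rw [lintegral_indicator (by
    exact (isClosed_le (by fun_prop) continuous_const).measurableSet)]
  by_cases hb : b^2 ≤ 1
  · have hs2 : s^2 = 1 - b^2 := Real.sq_sqrt (by linarith)
    have hIcc : {a : ℝ | a^2 + b^2 ≤ 1} = Set.Icc (-s) s := by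
      ext a
      simp only [Set.mem_setOf_eq, Set.mem_Icc]
      constructor
      · intro h; constructor <;> nlinarith
      · rintro ⟨h1, h2⟩; nlinarith
    rw [hIcc]
    rw [← ofReal_integral_eq_lintegral_ofReal]
    · rw [MeasureTheory.integral_Icc_eq_integral_Ioc,
        ← intervalIntegral.integral_of_le (by linarith : -s ≤ s)]
      rw [intervalIntegral.integral_sub intervalIntegrable_const intervalIntegral.intervalIntegrable_id]
      rw [intervalIntegral.integral_const, integral_id]
      congr 1
      simp only [smul_eq_mul]
      nlinarith
    · exact (continuous_const.sub continuous_id).integrableOn_Icc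
    · refine (ae_restrict_iff' measurableSet_Icc).2 (Filter.Eventually.of_forall ?_)
      rintro a ⟨h1, h2⟩
      simp only [Pi.zero_apply]
      linarith
  · push_neg at hb
    have hempty : {a : ℝ | a^2 + b^2 ≤ 1} = ∅ := by
      ext a; simp only [Set.mem_setOf_eq, Set.mem_empty_iff_false, iff_false]
      push_neg; nlinarith
    rw [hempty, Measure.restrict_empty, lintegral_zero_measure]
    rw [Eq.comm, ENNReal.ofReal_eq_zero]
    nlinarith

/-- The planar integral. -/
lemma planar_integral :
    ∫⁻ p : ℝ × ℝ, Set.indicator {p : ℝ × ℝ | p.1^2 + p.2^2 ≤ 1}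
      (fun p => ENNReal.ofReal (Real.sqrt (1 - p.2^2) - p.1)) p
      = ENNReal.ofReal (8/3) := by
  rw [MeasureTheory.Measure.volume_eq_prod]
  rw [MeasureTheory.lintegral_prod_symm']
  · simp only [chord_integral]
    have hcong : ∀ b : ℝ, ENNReal.ofReal (2 - 2 * b^2) =
        Set.indicator (Set.Icc (-1 : ℝ) 1) (fun b => ENNReal.ofReal (2 - 2 * b^2)) b := by
      intro b
      by_cases h : b ∈ Set.Icc (-1 : ℝ) 1
      · rw [Set.indicator_of_mem h]
      · rw [Set.indicator_of_notMem h, ENNReal.ofReal_eq_zero]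
        simp only [Set.mem_Icc, not_and_or, not_le] at h
        rcases h with h | h <;> nlinarith
    rw [lintegral_congr hcong]
    rw [lintegral_indicator measurableSet_Icc]
    rw [← ofReal_integral_eq_lintegral_ofReal]
    · rw [MeasureTheory.integral_Icc_eq_integral_Ioc,
        ← intervalIntegral.integral_of_le (by norm_num : (-1:ℝ) ≤ 1)]
      congr 1
      have : ∫ b in (-1:ℝ)..1, (2 - 2 * b^2) =
          (∫ b in (-1:ℝ)..1, (2:ℝ)) - 2 * ∫ b in (-1:ℝ)..1, b^2 := by
        rw [← intervalIntegral.integral_const_mul,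
          ← intervalIntegral.integral_sub intervalIntegrable_const]
        exact (intervalIntegral.intervalIntegrable_pow 2).const_mul 2
      rw [this, intervalIntegral.integral_const, integral_pow]
      norm_num
    · exact (continuous_const.sub (continuous_const.mul (continuous_pow 2))).integrableOn_Icc
    · refine (ae_restrict_iff' measurableSet_Icc).2 (Filter.Eventually.of_forall ?_)
      rintro b ⟨h1, h2⟩
      simp only [Pi.zero_apply]
      nlinarith
  · apply Measurable.indicator
    · apply ENNReal.measurable_ofReal.comp
      fun_prop
    · exact (isClosed_le (by fun_prop) continuous_const).measurableSet

/-- The measurable equivalence from `ℝ × ℝ` to the Euclidean plane. -/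
noncomputable def planeEquiv : (ℝ × ℝ) ≃ᵐ EuclideanSpace ℝ (Fin 2) :=
  (((MeasurableEquiv.toLp 2 (Fin 2 → ℝ)).symm).trans (MeasurableEquiv.finTwoArrow)).symm

lemma planeEquiv_measurePreserving : MeasurePreserving planeEquiv volume volume :=
  (((volume_preserving_finTwoArrow ℝ).comp
    (EuclideanSpace.volume_preserving_symm_measurableEquiv_toLp (Fin 2)))).symm _

lemma planeEquiv_apply0 (p : ℝ × ℝ) : planeEquiv p 0 = p.1 := rfl
lemma planeEquiv_apply1 (p : ℝ × ℝ) : planeEquiv p 1 = p.2 := rfl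

/-- The Euclidean disk integral of the exit-distance in direction `e₁`. -/
lemma disk_integral_e₁ :
    ∫⁻ x in Metric.closedBall (0 : EuclideanSpace ℝ (Fin 2)) 1,
      ENNReal.ofReal (Lval x e₁) = ENNReal.ofReal (8/3) := by
  have hae : (fun x => ENNReal.ofReal (Lval x e₁)) =ᵐ[volume.restrict
      (Metric.closedBall (0 : EuclideanSpace ℝ (Fin 2)) 1)]
      (fun x => ENNReal.ofReal (Real.sqrt (1 - (x 1)^2) - x 0)) := by
    have hsph : volume (Metric.sphere (0 : EuclideanSpace ℝ (Fin 2)) 1) = 0 :=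
      Measure.addHaar_sphere volume 0 1
    refine (ae_restrict_iff' measurableSet_closedBall).2 ?_
    have h0 : ∀ᵐ x : EuclideanSpace ℝ (Fin 2),
        x ∉ Metric.sphere (0 : EuclideanSpace ℝ (Fin 2)) 1 :=
      measure_eq_zero_iff_ae_notMem.1 hsph
    filter_upwards [h0] with x hx hxD
    have hlt : ‖x‖ < 1 := by
      rcases lt_or_eq_of_le (mem_closedBall_zero_iff.1 hxD) with h | h
      · exact h
      · exact absurd (by simpa [Metric.mem_sphere, dist_zero_right] using h) hx
    rw [Lval_formula x (by
      have := (mem_ball_iff_sq x).1 (mem_ball_zero_iff.2 hlt)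
      exact this)]
  rw [MeasureTheory.lintegral_congr_ae hae]
  rw [← lintegral_indicator measurableSet_closedBall]
  rw [planeEquiv_measurePreserving.lintegral_map_equiv
    (Set.indicator (Metric.closedBall (0 : EuclideanSpace ℝ (Fin 2)) 1)
      (fun x => ENNReal.ofReal (Real.sqrt (1 - (x 1)^2) - x 0))) planeEquiv]
  rw [← planar_integral]
  apply lintegral_congr
  intro p
  by_cases h : p.1^2 + p.2^2 ≤ 1
  · rw [Set.indicator_of_mem (show p ∈ {p : ℝ × ℝ | p.1^2 + p.2^2 ≤ 1} from h),
      Set.indicator_of_mem (show planeEquiv p ∈ Metric.closedBall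
        (0 : EuclideanSpace ℝ (Fin 2)) 1 from by
        rw [mem_closedBall_iff_sq, planeEquiv_apply0, planeEquiv_apply1]; exact h)]
    rw [planeEquiv_apply0, planeEquiv_apply1]
  · rw [Set.indicator_of_notMem (show p ∉ {p : ℝ × ℝ | p.1^2 + p.2^2 ≤ 1} from h),
      Set.indicator_of_notMem (show planeEquiv p ∉ Metric.closedBall
        (0 : EuclideanSpace ℝ (Fin 2)) 1 from by
        rw [mem_closedBall_iff_sq, planeEquiv_apply0, planeEquiv_apply1]; exact h)]

/-- The disk integral is independent of direction. -/
lemma disk_integral_dir (θ : ℝ) :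
    ∫⁻ x in Metric.closedBall (0 : EuclideanSpace ℝ (Fin 2)) 1,
      ENNReal.ofReal (Lval x ((WithLp.equiv 2 (Fin 2 → ℝ)).symm ![Real.cos θ, Real.sin θ]))
      = ENNReal.ofReal (8/3) := by
  set R := rotLIE θ
  have hmp : MeasurePreserving (R.toHomeomorph.toMeasurableEquiv) volume volume :=
    R.measurePreserving
  set D := Metric.closedBall (0 : EuclideanSpace ℝ (Fin 2)) 1 with hD
  have hRD : ∀ y : EuclideanSpace ℝ (Fin 2), R y ∈ D ↔ y ∈ D := by
    intro y
    simp only [hD, mem_closedBall_zero_iff, R.norm_map]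
  calc ∫⁻ x in D, ENNReal.ofReal
        (Lval x ((WithLp.equiv 2 (Fin 2 → ℝ)).symm ![Real.cos θ, Real.sin θ]))
      = ∫⁻ x, Set.indicator D (fun x => ENNReal.ofReal
          (Lval x ((WithLp.equiv 2 (Fin 2 → ℝ)).symm ![Real.cos θ, Real.sin θ]))) x := by
        rw [lintegral_indicator measurableSet_closedBall]
    _ = ∫⁻ y, Set.indicator D (fun x => ENNReal.ofReal
          (Lval x ((WithLp.equiv 2 (Fin 2 → ℝ)).symm ![Real.cos θ, Real.sin θ])))
          (R.toHomeomorph.toMeasurableEquiv y) := by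
        rw [hmp.lintegral_map_equiv]
    _ = ∫⁻ y, Set.indicator D (fun y => ENNReal.ofReal (Lval y e₁)) y := by
        apply lintegral_congr
        intro y
        have happ : (R.toHomeomorph.toMeasurableEquiv y) = R y := rfl
        by_cases h : y ∈ D
        · rw [happ, Set.indicator_of_mem ((hRD y).2 h), Set.indicator_of_mem h]
          rw [← rotLIE_e₁ θ]
          rw [Lval_rot]
        · rw [happ, Set.indicator_of_notMem (fun hc => h ((hRD y).1 hc)),
            Set.indicator_of_notMem h]
    _ = ∫⁻ y in D, ENNReal.ofReal (Lval y e₁) := by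
        rw [lintegral_indicator measurableSet_closedBall]
    _ = ENNReal.ofReal (8/3) := disk_integral_e₁

lemma disk_volume :
    volume (Metric.closedBall (0 : EuclideanSpace ℝ (Fin 2)) 1) = ENNReal.ofReal Real.pi := by
  rw [EuclideanSpace.volume_closedBall]
  simp only [Fintype.card_fin]
  norm_num [Real.Gamma_two, Real.sq_sqrt Real.pi_nonneg]

end Integral

/-- The expected straight-line distance from a uniformly random point of the unit disk
to the boundary, in a uniformly random direction, equals `8/(3π)`: averaging the exit
distance `L x u` over the disk and over directions `u = (cos θ, sin θ)`, `θ ∈ [0, 2π)`. -/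
theorem expected_linear_distance_unit_disk
    (D : Set (EuclideanSpace ℝ (Fin 2))) (hD : D = Metric.closedBall 0 1)
    (u : ℝ → EuclideanSpace ℝ (Fin 2))
    (hu : ∀ θ, u θ = (WithLp.equiv 2 (Fin 2 → ℝ)).symm ![Real.cos θ, Real.sin θ])
    (L : EuclideanSpace ℝ (Fin 2) → EuclideanSpace ℝ (Fin 2) → ℝ)
    (hL : ∀ x v, L x v = sInf {t : ℝ | 0 ≤ t ∧ x + t • v ∉ interior D}) :
    ∫⁻ θ in Set.Ioo (0 : ℝ) (2 * Real.pi),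
        (∫⁻ x in D, ENNReal.ofReal (L x (u θ))) =
      ENNReal.ofReal (8 / (3 * Real.pi)) * (ENNReal.ofReal (2 * Real.pi) * volume D) := by
  have hLval : ∀ x v, L x v = Lval x v := by
    intro x v
    rw [hL, Lval, hD]
  have hinner : ∀ θ : ℝ, (∫⁻ x in D, ENNReal.ofReal (L x (u θ))) = ENNReal.ofReal (8/3) := by
    intro θ
    simp only [hLval, hu θ, hD]
    exact disk_integral_dir θ
  calc ∫⁻ θ in Set.Ioo (0 : ℝ) (2 * Real.pi), (∫⁻ x in D, ENNReal.ofReal (L x (u θ)))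
      = ∫⁻ _ in Set.Ioo (0 : ℝ) (2 * Real.pi), ENNReal.ofReal (8/3) := by
        apply setLIntegral_congr_fun measurableSet_Ioo
        exact fun θ _ => hinner θ
    _ = ENNReal.ofReal (8/3) * ENNReal.ofReal (2 * Real.pi) := by
        rw [setLIntegral_const, Real.volume_Ioo, sub_zero]
    _ = ENNReal.ofReal (8 / (3 * Real.pi)) * (ENNReal.ofReal (2 * Real.pi) * volume D) := by
        rw [hD, disk_volume]
        rw [← ENNReal.ofReal_mul (by positivity), ← ENNReal.ofReal_mul (by positivity),
          ← ENNReal.ofReal_mul (by positivity)]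
        congr 1
        have hpi : Real.pi ≠ 0 := Real.pi_ne_zero
        field_simp
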